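/- Let n_k be a sequence of positive integers with n_k → ∞, and c_k a sequence of positive reals with c_k → 0. Then sup over ξ ∈ ℝ^{n_k} with ‖ξ‖ ≤ c_k/√(n_k) of the ratio vol(B \ (B + ξ))/vol(B) tends to 0 as k → ∞, where B is the closed unit Euclidean ball in ℝ^{n_k} and ‖·‖ is the Euclidean norm. -/

import Mathlib

open MeasureTheory Filter
open Real Metric

lemma gamma_sq_le (x : ℝ) (hx : 0 < x) :
    Gamma (x + 1) ^ 2 ≤ (x + 1/2) * Gamma (x + 1/2) ^ 2 := by
  have h1 : (0:ℝ) < x + 1/2 := by linarith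
  have h2 : (0:ℝ) < x + 3/2 := by linarith
  have hg1 := Real.Gamma_pos_of_pos h1
  have hg2 := Real.Gamma_pos_of_pos h2
  have hg0 := Real.Gamma_pos_of_pos (by linarith : (0:ℝ) < x + 1)
  have hcvx := convexOn_log_Gamma.2 (Set.mem_Ioi.mpr h1) (Set.mem_Ioi.mpr h2)
    (by norm_num : (0:ℝ) ≤ 1/2) (by norm_num : (0:ℝ) ≤ 1/2) (by norm_num)
  have hmid : (1/2 : ℝ) • (x + 1/2) + (1/2 : ℝ) • (x + 3/2) = x + 1 := by rw [smul_eq_mul, smul_eq_mul]; ring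
  rw [hmid] at hcvx
  simp only [Function.comp_apply, smul_eq_mul] at hcvx
  -- hcvx : log (Gamma (x+1)) ≤ 1/2 * log (Gamma (x+1/2)) + 1/2 * log (Gamma (x+3/2))
  have hsq : Gamma (x+1) ^ 2 ≤ Gamma (x + 1/2) * Gamma (x + 3/2) := by
    have := Real.exp_le_exp.mpr (by linarith : 2 * Real.log (Gamma (x+1)) ≤
      Real.log (Gamma (x+1/2)) + Real.log (Gamma (x+3/2)))
    rw [Real.exp_add, Real.exp_log hg1, Real.exp_log hg2] at this
    calc Gamma (x+1)^2 = Real.exp (2 * Real.log (Gamma (x+1))) := by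
          rw [mul_comm, Real.exp_mul, Real.exp_log hg0]; norm_num
      _ ≤ _ := this
  have hrec : Gamma (x + 3/2) = (x + 1/2) * Gamma (x + 1/2) := by
    have := Real.Gamma_add_one (ne_of_gt h1)
    rw [show x + 1/2 + 1 = x + 3/2 by ring] at this
    exact this
  rw [hrec] at hsq
  nlinarith [hg1]

lemma gamma_ratio (x : ℝ) (hx : 0 < x) :
    Gamma (x + 1) ≤ Real.sqrt (x + 1/2) * Gamma (x + 1/2) := by
  have h1 : (0:ℝ) < x + 1/2 := by linarith
  have hg1 := Real.Gamma_pos_of_pos h1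
  have hg0 := Real.Gamma_pos_of_pos (by linarith : (0:ℝ) < x + 1)
  have h := gamma_sq_le x hx
  calc Gamma (x+1) = Real.sqrt (Gamma (x+1) ^ 2) := (Real.sqrt_sq hg0.le).symm
    _ ≤ Real.sqrt ((x + 1/2) * Gamma (x + 1/2) ^ 2) := Real.sqrt_le_sqrt h
    _ = Real.sqrt (x + 1/2) * Gamma (x + 1/2) := by
        rw [Real.sqrt_mul h1.le, Real.sqrt_sq hg1.le]

lemma ball_vol_ratio (m : ℕ) :
    (volume (Metric.closedBall (0 : EuclideanSpace ℝ (Fin m)) 1)).toReal ≤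
      Real.sqrt (m + 1) * (volume (Metric.closedBall (0 : EuclideanSpace ℝ (Fin (m+1))) 1)).toReal := by
  rcases Nat.eq_zero_or_pos m with hm | hm
  · subst hm
    have h0 : volume (Metric.closedBall (0 : EuclideanSpace ℝ (Fin 0)) 1) = 1 := by
      rw [volume_euclideanSpace_eq_dirac, Measure.dirac_apply' _ measurableSet_closedBall]
      simp
    have h1 : volume (Metric.closedBall (0 : EuclideanSpace ℝ (Fin 1)) 1) = ENNReal.ofReal 2 := by
      rw [EuclideanSpace.volume_closedBall]
      simp only [Fintype.card_fin, ENNReal.ofReal_one, one_pow, one_mul, pow_one]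
      congr 1
      rw [show ((1:ℕ):ℝ)/2 + 1 = 1/2 + 1 by norm_num, Real.Gamma_add_one (by norm_num : (1/2:ℝ) ≠ 0),
        Real.Gamma_one_half_eq]
      have hπ : Real.sqrt π ≠ 0 := ne_of_gt (Real.sqrt_pos.mpr Real.pi_pos)
      field_simp
    rw [h0, h1]
    simp only [ENNReal.toReal_one, ENNReal.toReal_ofReal (by norm_num : (0:ℝ) ≤ 2)]
    norm_num
  · have : Nonempty (Fin m) := ⟨⟨0, hm⟩⟩
    rw [EuclideanSpace.volume_closedBall, EuclideanSpace.volume_closedBall]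
    simp only [Fintype.card_fin, ENNReal.ofReal_one, one_pow, one_mul]
    set x : ℝ := (m + 1) / 2 with hxdef
    have hx : (0:ℝ) < x := by positivity
    have h1 : ((m:ℝ)) / 2 + 1 = x + 1/2 := by first | (rw [hxdef]; push_cast; ring) | rw [hxdef]
    have h2 : ((m:ℝ) + 1) / 2 + 1 = x + 1 := by first | (rw [hxdef]; push_cast; ring) | rw [hxdef]
    rw [ENNReal.toReal_ofReal (by positivity), ENNReal.toReal_ofReal (by positivity)]
    push_cast
    rw [h1, h2]
    have hg1 := Real.Gamma_pos_of_pos (by linarith : (0:ℝ) < x + 1/2)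
    have hg0 := Real.Gamma_pos_of_pos (by linarith : (0:ℝ) < x + 1)
    have hratio := gamma_ratio x hx
    have hsqle : Real.sqrt (x + 1/2) ≤ Real.sqrt ((m:ℝ)+1) * Real.sqrt π := by
      rw [← Real.sqrt_mul (by positivity)]
      apply Real.sqrt_le_sqrt
      have hpi : (1:ℝ) ≤ π := by nlinarith [Real.pi_gt_three]
      have hle : x + 1/2 ≤ (m:ℝ) + 1 := by rw [hxdef]; push_cast; linarith
      nlinarith [hx]
    have hπ : (0:ℝ) < Real.sqrt π := Real.sqrt_pos.mpr Real.pi_pos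
    have hsp : (0:ℝ) < Real.sqrt π ^ m := by positivity
    have key : Gamma (x+1) ≤ Real.sqrt ((m:ℝ)+1) * Real.sqrt π * Gamma (x+1/2) := by
      calc Gamma (x+1) ≤ Real.sqrt (x+1/2) * Gamma (x+1/2) := hratio
        _ ≤ _ := by nlinarith
    have goal_eq : Real.sqrt ((m:ℝ)+1) * (Real.sqrt π ^ (m+1) / Gamma (x+1)) =
        (Real.sqrt ((m:ℝ)+1) * Real.sqrt π ^ (m+1)) / Gamma (x+1) := by ring
    rw [goal_eq, div_le_div_iff₀ hg1 hg0]
    have hps : Real.sqrt π ^ (m+1) = Real.sqrt π ^ m * Real.sqrt π := pow_succ _ _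
    rw [hps]
    nlinarith [mul_le_mul_of_nonneg_left key hsp.le]

lemma sqrt_le_one_iff' {s : ℝ} (hs : 0 ≤ s) : Real.sqrt s ≤ 1 ↔ s ≤ 1 := by
  constructor
  · intro h
    nlinarith [Real.sq_sqrt hs, Real.sqrt_nonneg s]
  · intro h
    calc Real.sqrt s ≤ Real.sqrt 1 := Real.sqrt_le_sqrt h
      _ = 1 := Real.sqrt_one

lemma diff_vol_le (m : ℕ) (ξ : EuclideanSpace ℝ (Fin (m+1))) :
    volume (closedBall (0 : EuclideanSpace ℝ (Fin (m+1))) 1 \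
        ((fun y => ξ + y) '' closedBall 0 1)) ≤
      ENNReal.ofReal ‖ξ‖ * volume (closedBall (0 : EuclideanSpace ℝ (Fin m)) 1) := by
  classical
  set d : ℝ := ‖ξ‖ with hd
  have hd0 : 0 ≤ d := norm_nonneg ξ
  set e : EuclideanSpace ℝ (Fin (m+1)) := EuclideanSpace.single (0 : Fin (m+1)) (1:ℝ) with he
  -- Step A : image is a closed ball
  have himg : (fun y => ξ + y) '' closedBall (0 : EuclideanSpace ℝ (Fin (m+1))) 1
      = closedBall ξ 1 := by
    ext z
    simp only [Set.mem_image, mem_closedBall, dist_zero_right, dist_eq_norm]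
    constructor
    · rintro ⟨y, hy, rfl⟩; simpa using hy
    · intro hz; exact ⟨z - ξ, by simpa using hz, by abel⟩
  rw [himg]
  -- Step B : rotate ξ to d • e
  have hnorm : ‖d • e‖ = ‖ξ‖ := by
    rw [norm_smul, he, EuclideanSpace.norm_single]
    simp [hd, abs_of_nonneg hd0]
  have hrot : volume (closedBall (0 : EuclideanSpace ℝ (Fin (m+1))) 1 \ closedBall ξ 1)
      = volume (closedBall (0 : EuclideanSpace ℝ (Fin (m+1))) 1 \ closedBall (d • e) 1) := by
    by_cases hξ : ξ = 0
    · have : d = 0 := by rw [hd, hξ, norm_zero]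
      rw [hξ, this, zero_smul]
    · set f := Submodule.reflection (ℝ ∙ (d • e - ξ))ᗮ with hf
      have hfe : f (d • e) = ξ := Submodule.reflection_sub hnorm
      have hmp : MeasurePreserving f volume volume := f.measurePreserving
      rw [← hmp.measure_preimage
        ((measurableSet_closedBall.diff measurableSet_closedBall).nullMeasurableSet)]
      congr 1
      ext x
      have hx1 : ‖f x‖ = ‖x‖ := f.norm_map x
      have hx2 : ‖f x - ξ‖ = ‖x - d • e‖ := by rw [← hfe, ← map_sub, f.norm_map]
      simp only [Set.mem_preimage, Set.mem_diff, mem_closedBall, dist_eq_norm, sub_zero,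
        hx1, hx2]
  rw [hrot]
  -- Step C : transfer to ℝ × (Fin m → ℝ)
  set T : Set (ℝ × (Fin m → ℝ)) :=
    {p | p.1^2 + ∑ i, (p.2 i)^2 ≤ 1 ∧ 1 < (p.1 - d)^2 + ∑ i, (p.2 i)^2} with hT
  set φ := (MeasurableEquiv.toLp 2 (Fin (m+1) → ℝ)).symm with hφ
  set ψ := MeasurableEquiv.piFinSuccAbove (fun _ : Fin (m+1) => ℝ) 0 with hψ
  have hφapp : ∀ (x : EuclideanSpace ℝ (Fin (m+1))) (i : Fin (m+1)), φ x i = x i := by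
    intro x i
    rfl
  have hψφ : ∀ x : EuclideanSpace ℝ (Fin (m+1)),
      ψ (φ x) = (x 0, fun j : Fin m => x j.succ) := by
    intro x
    rw [hψ, MeasurableEquiv.piFinSuccAbove_apply]
    simp only [Fin.succAbove_zero, hφapp]
    rfl
  have hset : closedBall (0 : EuclideanSpace ℝ (Fin (m+1))) 1 \ closedBall (d • e) 1
      = φ ⁻¹' (ψ ⁻¹' T) := by
    ext x
    have he0 : (d • e) 0 = d := by
      simp [he, EuclideanSpace.single_apply]
    have hes : ∀ i : Fin m, (d • e) i.succ = 0 := by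
      intro i
      simp [he, EuclideanSpace.single_apply, Fin.succ_ne_zero]
    have h1 : ‖x‖ ≤ 1 ↔ (x 0)^2 + ∑ i : Fin m, (x i.succ)^2 ≤ 1 := by
      rw [EuclideanSpace.norm_eq]
      simp only [Real.norm_eq_abs, sq_abs]
      rw [sqrt_le_one_iff' (by positivity), Fin.sum_univ_succ]
    have h2 : dist x (d • e) ≤ 1 ↔ (x 0 - d)^2 + ∑ i : Fin m, (x i.succ)^2 ≤ 1 := by
      rw [EuclideanSpace.dist_eq]
      simp only [Real.dist_eq, sq_abs]
      rw [sqrt_le_one_iff' (by positivity), Fin.sum_univ_succ, he0]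
      simp only [hes, sub_zero]
    simp only [Set.mem_diff, mem_closedBall, dist_zero_right, Set.mem_preimage, hψφ, hT,
      Set.mem_setOf_eq]
    rw [h1]
    constructor
    · rintro ⟨ha, hb⟩
      exact ⟨ha, by simpa [not_le, h2] using hb⟩
    · rintro ⟨ha, hb⟩
      exact ⟨ha, by simp [h2, not_le]; linarith⟩
  rw [hset]
  have hm1 : Measurable (fun p : ℝ × (Fin m → ℝ) => p.1^2 + ∑ i, (p.2 i)^2) :=
    (measurable_fst.pow_const 2).add
      (Finset.measurable_sum _ fun i _ =>
        ((measurable_pi_apply i).comp measurable_snd).pow_const 2)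
  have hm2 : Measurable (fun p : ℝ × (Fin m → ℝ) => (p.1 - d)^2 + ∑ i, (p.2 i)^2) :=
    ((measurable_fst.sub measurable_const).pow_const 2).add
      (Finset.measurable_sum _ fun i _ =>
        ((measurable_pi_apply i).comp measurable_snd).pow_const 2)
  have hTmeas : MeasurableSet T := by
    apply MeasurableSet.inter
    · exact measurableSet_le hm1 measurable_const
    · exact measurableSet_lt measurable_const hm2
  have hymeas : MeasurableSet {y : Fin m → ℝ | ∑ i, y i ^ 2 ≤ 1} :=
    measurableSet_le (Finset.measurable_sum _ fun i _ => (measurable_pi_apply i).pow_const 2)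
      measurable_const
  rw [(EuclideanSpace.volume_preserving_symm_measurableEquiv_toLp (Fin (m+1))).measure_preimage
    ((ψ.measurable hTmeas).nullMeasurableSet)]
  rw [(volume_preserving_piFinSuccAbove (fun _ : Fin (m+1) => ℝ) 0).measure_preimage
    hTmeas.nullMeasurableSet]
  have hvolT : volume T ≤ ENNReal.ofReal d * volume {y : Fin m → ℝ | ∑ i, y i ^ 2 ≤ 1} := by
    rw [Measure.volume_eq_prod, Measure.prod_apply_symm hTmeas]
    have hsec : ∀ y : Fin m → ℝ, volume ((fun t => (t, y)) ⁻¹' T) ≤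
        Set.indicator {y : Fin m → ℝ | ∑ i, y i ^ 2 ≤ 1}
          (fun _ => ENNReal.ofReal d) y := by
      intro y
      by_cases hy : ∑ i, y i ^ 2 ≤ 1
      · have hind : ({y : Fin m → ℝ | ∑ i, y i ^ 2 ≤ 1}).indicator
            (fun _ => ENNReal.ofReal d) y = ENNReal.ofReal d :=
          Set.indicator_of_mem (show y ∈ {y : Fin m → ℝ | ∑ i, y i ^ 2 ≤ 1} from hy) _
        rw [hind]
        set s := ∑ i, y i ^ 2 with hs
        have hs0 : 0 ≤ s := by positivity
        set u := Real.sqrt (1 - s) with hu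
        have hu0 : 0 ≤ u := Real.sqrt_nonneg _
        have hu2 : u ^ 2 = 1 - s := Real.sq_sqrt (by linarith)
        have hsub : (fun t => (t, y)) ⁻¹' T ⊆ Set.Ico (-u) (d - u) := by
          intro t ht
          obtain ⟨ht1, ht2⟩ := ht
          simp only at ht1 ht2
          have habs : |t| ≤ u := by
            have : t ^ 2 ≤ u ^ 2 := by linarith
            calc |t| = Real.sqrt (t^2) := (Real.sqrt_sq_eq_abs t).symm
              _ ≤ Real.sqrt (u^2) := Real.sqrt_le_sqrt this
              _ = u := by rw [Real.sqrt_sq hu0]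
          have habs2 : u < |t - d| := by
            have h' : u ^ 2 < (t - d) ^ 2 := by linarith
            calc u = Real.sqrt (u^2) := (Real.sqrt_sq hu0).symm
              _ < Real.sqrt ((t-d)^2) := Real.sqrt_lt_sqrt (by positivity) h'
              _ = |t - d| := Real.sqrt_sq_eq_abs _
          have h3 := abs_le.mp habs
          constructor
          · linarith [h3.1]
          · rcases lt_abs.mp habs2 with h | h
            · linarith [h3.2]
            · linarith
        calc volume ((fun t => (t, y)) ⁻¹' T) ≤ volume (Set.Ico (-u) (d - u)) :=
              measure_mono hsub
          _ = ENNReal.ofReal (d - u - (-u)) := Real.volume_Ico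
          _ = ENNReal.ofReal d := by norm_num
      · have hind : ({y : Fin m → ℝ | ∑ i, y i ^ 2 ≤ 1}).indicator
            (fun _ => ENNReal.ofReal d) y = 0 :=
          Set.indicator_of_notMem (show y ∉ {y : Fin m → ℝ | ∑ i, y i ^ 2 ≤ 1} from hy) _
        rw [hind]
        have hempty : (fun t => (t, y)) ⁻¹' T = ∅ := by
          ext t
          simp only [Set.mem_preimage, hT, Set.mem_setOf_eq, Set.mem_empty_iff_false,
            iff_false, not_and]
          intro h1
          exfalso
          nlinarith [sq_nonneg t]
        simp [hempty]
    calc ∫⁻ y, volume ((fun t => (t, y)) ⁻¹' T)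
        ≤ ∫⁻ y, Set.indicator {y : Fin m → ℝ | ∑ i, y i ^ 2 ≤ 1}
            (fun _ => ENNReal.ofReal d) y := lintegral_mono hsec
      _ = ENNReal.ofReal d * volume {y : Fin m → ℝ | ∑ i, y i ^ 2 ≤ 1} := by
          rw [lintegral_indicator_const hymeas]
  -- Step E : identify the (Fin m → ℝ) ball volume
  have hEm : volume {y : Fin m → ℝ | ∑ i, y i ^ 2 ≤ 1}
      = volume (closedBall (0 : EuclideanSpace ℝ (Fin m)) 1) := by
    rw [← (EuclideanSpace.volume_preserving_symm_measurableEquiv_toLp (Fin m)).measure_preimage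
      hymeas.nullMeasurableSet]
    congr 1
    ext x
    simp only [Set.mem_preimage, Set.mem_setOf_eq, mem_closedBall, dist_zero_right]
    have happ : ∀ i, (MeasurableEquiv.toLp 2 (Fin m → ℝ)).symm x i = x i := fun _ => rfl
    simp only [happ]
    rw [EuclideanSpace.norm_eq]
    simp only [Real.norm_eq_abs, sq_abs]
    rw [sqrt_le_one_iff' (by positivity)]
  rw [← hEm]
  exact hvolT

lemma key_bound (N : ℕ) (hN : 0 < N) (C : ℝ) (hC : 0 < C) :
    0 ≤ (⨆ ξ : {ξ : EuclideanSpace ℝ (Fin N) // ‖ξ‖ ≤ C / Real.sqrt N},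
        (volume ((Metric.closedBall (0 : EuclideanSpace ℝ (Fin N)) 1) \
            ((fun y => ξ.1 + y) '' (Metric.closedBall 0 1)))).toReal /
          (volume (Metric.closedBall (0 : EuclideanSpace ℝ (Fin N)) 1)).toReal) ∧
      (⨆ ξ : {ξ : EuclideanSpace ℝ (Fin N) // ‖ξ‖ ≤ C / Real.sqrt N},
        (volume ((Metric.closedBall (0 : EuclideanSpace ℝ (Fin N)) 1) \
            ((fun y => ξ.1 + y) '' (Metric.closedBall 0 1)))).toReal /
          (volume (Metric.closedBall (0 : EuclideanSpace ℝ (Fin N)) 1)).toReal) ≤ C := by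
  obtain ⟨m, rfl⟩ : ∃ m, N = m + 1 := ⟨N - 1, (Nat.succ_pred_eq_of_pos hN).symm⟩
  have hsN : (0:ℝ) < Real.sqrt (m+1 : ℕ) := Real.sqrt_pos.mpr (by positivity)
  have hne : Nonempty {ξ : EuclideanSpace ℝ (Fin (m+1)) // ‖ξ‖ ≤ C / Real.sqrt (m+1 : ℕ)} :=
    ⟨⟨0, by rw [norm_zero]; positivity⟩⟩
  have hVpos : 0 < (volume (Metric.closedBall (0 : EuclideanSpace ℝ (Fin (m+1))) 1)).toReal := by
    refine ENNReal.toReal_pos (ne_of_gt ?_) (ne_of_lt measure_closedBall_lt_top)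
    exact measure_closedBall_pos volume 0 one_pos
  have hVfin : (volume (Metric.closedBall (0 : EuclideanSpace ℝ (Fin m)) 1)) ≠ ⊤ :=
    ne_of_lt measure_closedBall_lt_top
  have hterm : ∀ ξ : {ξ : EuclideanSpace ℝ (Fin (m+1)) // ‖ξ‖ ≤ C / Real.sqrt (m+1 : ℕ)},
      (volume ((Metric.closedBall (0 : EuclideanSpace ℝ (Fin (m+1))) 1) \
            ((fun y => ξ.1 + y) '' (Metric.closedBall 0 1)))).toReal /
          (volume (Metric.closedBall (0 : EuclideanSpace ℝ (Fin (m+1))) 1)).toReal ≤ C := by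
    rintro ⟨ξ, hξ⟩
    rw [div_le_iff₀ hVpos]
    have h1 : (volume ((Metric.closedBall (0 : EuclideanSpace ℝ (Fin (m+1))) 1) \
            ((fun y => ξ + y) '' (Metric.closedBall 0 1)))).toReal ≤
        ‖ξ‖ * (volume (Metric.closedBall (0 : EuclideanSpace ℝ (Fin m)) 1)).toReal := by
      have := diff_vol_le m ξ
      have hfin : ENNReal.ofReal ‖ξ‖ * volume (Metric.closedBall (0 : EuclideanSpace ℝ (Fin m)) 1)
          ≠ ⊤ := ENNReal.mul_ne_top ENNReal.ofReal_ne_top hVfin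
      calc (volume _).toReal ≤ (ENNReal.ofReal ‖ξ‖ *
            volume (Metric.closedBall (0 : EuclideanSpace ℝ (Fin m)) 1)).toReal :=
            ENNReal.toReal_mono hfin this
        _ = ‖ξ‖ * (volume (Metric.closedBall (0 : EuclideanSpace ℝ (Fin m)) 1)).toReal := by
            rw [ENNReal.toReal_mul, ENNReal.toReal_ofReal (norm_nonneg ξ)]
    calc (volume ((Metric.closedBall (0 : EuclideanSpace ℝ (Fin (m+1))) 1) \
            ((fun y => ξ + y) '' (Metric.closedBall 0 1)))).toReal
        ≤ ‖ξ‖ * (volume (Metric.closedBall (0 : EuclideanSpace ℝ (Fin m)) 1)).toReal := h1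
      _ ≤ (C / Real.sqrt (m+1 : ℕ)) *
            (Real.sqrt ((m:ℝ) + 1) *
              (volume (Metric.closedBall (0 : EuclideanSpace ℝ (Fin (m+1))) 1)).toReal) := by
          apply mul_le_mul hξ ?_ ENNReal.toReal_nonneg (by positivity)
          exact ball_vol_ratio m
      _ = C * (volume (Metric.closedBall (0 : EuclideanSpace ℝ (Fin (m+1))) 1)).toReal := by
          have : Real.sqrt ((m:ℕ)+1 : ℝ) = Real.sqrt ((m:ℝ)+1) := by push_cast; ring_nf
          field_simp [this]
          rw [Nat.cast_add, Nat.cast_one]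
  constructor
  · apply Real.iSup_nonneg
    intro ξ
    positivity
  · exact ciSup_le hterm

/-- Translating the unit Euclidean ball in `ℝ^{n_k}` by a vector of norm at most
`c_k/√(n_k)` (with `c_k → 0`, `n_k → ∞`) moves only a vanishing fraction of its volume:
the supremum over such translation vectors `ξ` of
`vol(B \ (B + ξ))/vol(B)` tends to `0` as `k → ∞`. -/
theorem ball_translation_volume_ratio_tendsto_zero
    (n : ℕ → ℕ) (c : ℕ → ℝ) (hn : ∀ k, 0 < n k) (hntop : Tendsto n atTop atTop)
    (hc : ∀ k, 0 < c k) (hc0 : Tendsto c atTop (nhds 0)) :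
    Tendsto (fun k =>
      ⨆ ξ : {ξ : EuclideanSpace ℝ (Fin (n k)) // ‖ξ‖ ≤ c k / Real.sqrt (n k)},
        (volume ((Metric.closedBall (0 : EuclideanSpace ℝ (Fin (n k))) 1) \
            ((fun y => ξ.1 + y) '' (Metric.closedBall 0 1)))).toReal /
          (volume (Metric.closedBall (0 : EuclideanSpace ℝ (Fin (n k))) 1)).toReal)
      atTop (nhds 0) := by
  exact squeeze_zero (fun k => (key_bound (n k) (hn k) (c k) (hc k)).1)
    (fun k => (key_bound (n k) (hn k) (c k) (hc k)).2) hc0
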